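/- Let q : ℕ → ℤ be an IQ function whose values are O(n) (i.e., |q(n)| ≤ Kn + K for some constant K). Then there exists a positive integer π such that for each residue a mod π, the function n ↦ q(πn + a) is an integral linear polynomial in n: q(πn+a) = αn + β for some α, β ∈ ℤ depending on a. -/

import Mathlib

open Polynomial Filter

lemma aux_deg_le_one (R : Polynomial ℤ) (K : ℕ)
    (h : ∀ n : ℕ, |R.eval (n : ℤ)| ≤ K * n + K) : R.natDegree ≤ 1 := by
  by_contra hd
  push_neg at hd
  have hR0 : R ≠ 0 := fun h0 => by simp [h0] at hd
  set L : Polynomial ℤ := C (K : ℤ) * X + C (K : ℤ) with hL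
  set S : Polynomial ℤ := R ^ 2 - L ^ 2 with hS
  have hLdeg : (L ^ 2).degree ≤ 2 := by
    refine (degree_pow_le _ _).trans ?_
    have : L.degree ≤ 1 := degree_linear_le
    calc 2 • L.degree ≤ 2 • (1 : WithBot ℕ) := by
          exact nsmul_le_nsmul_right this 2
      _ = 2 := by norm_num
  have hR2 : (R ^ 2).natDegree = 2 * R.natDegree := natDegree_pow R 2
  have hR2ne : R ^ 2 ≠ 0 := pow_ne_zero _ hR0
  have hRdeg : (2 : WithBot ℕ) < (R ^ 2).degree := by
    rw [degree_eq_natDegree hR2ne, hR2]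
    exact_mod_cast by omega
  have hlt : (L ^ 2).degree < (R ^ 2).degree := lt_of_le_of_lt hLdeg hRdeg
  have hSdeg : S.degree = (R ^ 2).degree := degree_sub_eq_left_of_degree_lt hlt
  have hSlead : S.leadingCoeff = (R ^ 2).leadingCoeff := leadingCoeff_sub_of_degree_lt hlt
  -- move to ℝ
  set T : Polynomial ℝ := S.map (Int.castRingHom ℝ) with hT
  have hTdeg : T.degree = S.degree :=
    degree_map_eq_of_injective (Int.cast_injective) S
  have hTpos : 0 < T.degree := by
    rw [hTdeg, hSdeg]; exact lt_trans (by norm_num) hRdeg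
  have hTlead : 0 ≤ T.leadingCoeff := by
    have : T.leadingCoeff = ((S.leadingCoeff : ℤ) : ℝ) := by
      rw [hT, leadingCoeff, natDegree_map_eq_of_injective (Int.cast_injective),
        coeff_map]
      rfl
    rw [this, hSlead, leadingCoeff_pow]
    positivity
  have htend : Tendsto (fun x : ℝ => T.eval x) atTop atTop :=
    tendsto_atTop_of_leadingCoeff_nonneg T hTpos hTlead
  have htend' : Tendsto (fun n : ℕ => T.eval (n : ℝ)) atTop atTop :=
    htend.comp tendsto_natCast_atTop_atTop
  obtain ⟨n, hn⟩ := (htend'.eventually (eventually_gt_atTop 0)).exists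
  have heval : T.eval ((n : ℕ) : ℝ) = ((S.eval (n : ℤ) : ℤ) : ℝ) := by
    rw [hT]
    simp [eval_map, eval₂_at_natCast]
  have hSpos : 0 < S.eval (n : ℤ) := by
    have := hn
    rw [heval] at this
    exact_mod_cast this
  have hle : (R.eval (n : ℤ)) ^ 2 ≤ ((K : ℤ) * n + K) ^ 2 := by
    have hb := h n
    have := abs_le.mp hb
    exact sq_le_sq' this.1 this.2
  rw [hS] at hSpos
  simp only [eval_sub, eval_pow, hL, eval_add, eval_mul, eval_C, eval_X] at hSpos
  omega

/-- `p` is an integral quasipolynomial. -/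
def IsQuasiPoly (p : ℕ → ℤ) : Prop :=
  ∃ π : ℕ, 0 < π ∧ ∃ P : ℕ → Polynomial ℤ, ∀ n : ℕ, p n = (P (n % π)).eval (n : ℤ)

/-- `q` is an IQ function. -/
def IsIQ (q : ℕ → ℤ) : Prop :=
  ∃ p : ℕ → ℤ, IsQuasiPoly p ∧ ∃ C : ℤ, 0 < C ∧ ∀ n : ℕ, C ∣ p n ∧ q n = p n / C

/-- An IQ function of size `O(n)` is, on each residue class mod some period `π`,
an integral linear polynomial: `q(πn + a) = αn + β` with `α, β ∈ ℤ`. -/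
theorem stmt_11 (q : ℕ → ℤ) (hq : IsIQ q)
    (hO : ∃ K : ℕ, ∀ n : ℕ, |q n| ≤ K * n + K) :
    ∃ π : ℕ, 0 < π ∧ ∀ a : ℕ, ∃ α β : ℤ,
      ∀ n : ℕ, q (π * n + a) = α * n + β := by
  obtain ⟨p, ⟨π, hπ, P, hP⟩, C, hC, hCp⟩ := hq
  obtain ⟨K, hK⟩ := hO
  refine ⟨π, hπ, fun a => ?_⟩
  set R : Polynomial ℤ :=
    (P (a % π)).comp (Polynomial.C (π : ℤ) * Polynomial.X + Polynomial.C (a : ℤ)) with hR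
  have hReval : ∀ n : ℕ, R.eval (n : ℤ) = p (π * n + a) := by
    intro n
    rw [hP (π * n + a), Nat.mul_add_mod]
    simp only [hR, eval_comp, eval_add, eval_mul, eval_C, eval_X]
    push_cast
    ring_nf
  have hpq : ∀ n : ℕ, p n = C * q n := by
    intro n
    obtain ⟨hd, he⟩ := hCp n
    rw [he, Int.mul_ediv_cancel' hd]
  set K' : ℕ := C.natAbs * (K * π + K * a + K) with hK'
  have hbound : ∀ n : ℕ, |R.eval (n : ℤ)| ≤ K' * n + K' := by
    intro n
    rw [hReval n, hpq]
    rw [abs_mul, abs_of_pos hC]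
    have h1 := hK (π * n + a)
    have h2 : C * |q (π * n + a)| ≤ C * ((K : ℤ) * (π * n + a) + K) := by
      refine mul_le_mul_of_nonneg_left ?_ hC.le
      calc |q (π * n + a)| ≤ (K : ℤ) * (π * n + a : ℕ) + K := h1
        _ = (K : ℤ) * ((π : ℤ) * n + a) + K := by push_cast; ring
    refine h2.trans ?_
    have hCle : C ≤ (C.natAbs : ℤ) := le_of_eq (Int.abs_eq_natAbs C ▸ (abs_of_pos hC).symm)
    have : C * ((K : ℤ) * ((π : ℤ) * n + a) + K) = (C * K * π) * n + C * (K * a + K) := by ring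
    rw [this]
    push_cast [hK']
    have hn : (0 : ℤ) ≤ n := Int.natCast_nonneg n
    rw [abs_of_pos hC]
    nlinarith [mul_nonneg (mul_nonneg hC.le
        (by positivity : (0:ℤ) ≤ (K:ℤ) * a + K)) hn,
      mul_nonneg (mul_nonneg hC.le (Int.natCast_nonneg K)) (Int.natCast_nonneg π)]
  have hdeg : R.natDegree ≤ 1 := aux_deg_le_one R K' hbound
  set c₁ := R.coeff 1
  set c₀ := R.coeff 0
  have hRform : ∀ n : ℕ, R.eval (n : ℤ) = c₁ * n + c₀ := by
    intro n
    conv_lhs => rw [eq_X_add_C_of_natDegree_le_one hdeg]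
    simp
    rfl
  have hdvd : ∀ n : ℕ, C ∣ c₁ * n + c₀ := by
    intro n
    rw [← hRform n, hReval n]
    exact (hCp _).1
  have hd0 : C ∣ c₀ := by simpa using hdvd 0
  have hd1 : C ∣ c₁ := by
    have h1 := hdvd 1
    simp only [Nat.cast_one, mul_one] at h1
    simpa using dvd_sub h1 hd0
  obtain ⟨α, hα⟩ := hd1
  obtain ⟨β, hβ⟩ := hd0
  refine ⟨α, β, fun n => ?_⟩
  have hq' := (hCp (π * n + a)).2
  rw [hq', ← hReval n, hRform n, hα, hβ, mul_assoc, ← mul_add,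
    Int.mul_ediv_cancel_left _ hC.ne']
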